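/- Let A be a Banach lattice algebra and let a, b ∈ A each be both a left band projection and a right band projection. Then ab = ba. -/

import Mathlib

/-- Auxiliary lemma: the left multiplication band projections commute (one inequality). -/
lemma band_proj_comm_le
    {A : Type*} [NormedAddCommGroup A] [Lattice A] [HasSolidNorm A] [IsOrderedAddMonoid A]
    [NormedSpace ℝ A]
    (mul : A →ₗ[ℝ] A →ₗ[ℝ] A)
    (mul_assoc : ∀ a b c : A, mul (mul a b) c = mul a (mul b c))
    (mul_nonneg : ∀ a b : A, 0 ≤ a → 0 ≤ b → 0 ≤ mul a b)
    (a : A) (ha : 0 ≤ a)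
    (haL : ∀ x : A, 0 ≤ x → mul a x ≤ x ∧ mul (mul a a) x = mul a x)
    (b : A) (hb : 0 ≤ b)
    (hbL : ∀ x : A, 0 ≤ x → mul b x ≤ x ∧ mul (mul b b) x = mul b x)
    (x : A) (hx : 0 ≤ x) :
    mul a (mul b x) ≤ mul b (mul a x) := by
  set z := mul a (mul b x) with hzdef
  have hbx : 0 ≤ mul b x := mul_nonneg b x hb hx
  have hz0 : 0 ≤ z := mul_nonneg a (mul b x) ha hbx
  have hz_le : z ≤ mul b x := (haL (mul b x) hbx).1
  -- b z = z
  have hbbx : mul b (mul b x) = mul b x := by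
    rw [← mul_assoc, (hbL x hx).2]
  have h1 : mul b z ≤ z := (hbL z hz0).1
  have h2 : z ≤ mul b z := by
    have hpos : 0 ≤ mul b x - z := sub_nonneg.mpr hz_le
    have := (hbL (mul b x - z) hpos).1
    rw [map_sub, hbbx] at this
    exact (sub_le_sub_iff_left (mul b x)).mp this
  have hbz : mul b z = z := le_antisymm h1 h2
  -- z ≤ mul a x
  have h3 : z ≤ mul a x := by
    have hpos : 0 ≤ x - mul b x := sub_nonneg.mpr (hbL x hx).1
    have := mul_nonneg a (x - mul b x) ha hpos
    rw [map_sub] at this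
    have h := sub_nonneg.mp this
    exact h
  -- conclude
  calc z = mul b z := hbz.symm
    _ ≤ mul b (mul a x) := by
        have hpos : 0 ≤ mul a x - z := sub_nonneg.mpr h3
        have := mul_nonneg b (mul a x - z) hb hpos
        rw [map_sub] at this
        exact sub_nonneg.mp this

/-- In a Banach lattice algebra, any two elements that are both left
and right band projections commute. -/
theorem left_and_right_band_projections_commute
    {A : Type*} [NormedAddCommGroup A] [Lattice A] [HasSolidNorm A] [IsOrderedAddMonoid A]
    [NormedSpace ℝ A]
    [PosSMulStrictMono ℝ A] [CompleteSpace A]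
    (mul : A →ₗ[ℝ] A →ₗ[ℝ] A)
    (mul_assoc : ∀ a b c : A, mul (mul a b) c = mul a (mul b c))
    (norm_mul_le : ∀ a b : A, ‖mul a b‖ ≤ ‖a‖ * ‖b‖)
    (mul_nonneg : ∀ a b : A, 0 ≤ a → 0 ≤ b → 0 ≤ mul a b)
    (a : A) (ha : 0 ≤ a)
    (haL : ∀ x : A, 0 ≤ x → mul a x ≤ x ∧ mul (mul a a) x = mul a x)
    (haR : ∀ x : A, 0 ≤ x → mul x a ≤ x ∧ mul x (mul a a) = mul x a)
    (b : A) (hb : 0 ≤ b)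
    (hbL : ∀ x : A, 0 ≤ x → mul b x ≤ x ∧ mul (mul b b) x = mul b x)
    (hbR : ∀ x : A, 0 ≤ x → mul x b ≤ x ∧ mul x (mul b b) = mul x b) :
    mul a b = mul b a := by
  set p := mul a b with hp
  set q := mul b a with hq
  have hp0 : 0 ≤ p := mul_nonneg a b ha hb
  have hq0 : 0 ≤ q := mul_nonneg b a hb ha
  -- q ≤ b and p ≤ a
  have hqb : q ≤ b := (haR b hb).1
  have hpa : p ≤ a := (hbR a ha).1
  -- a q = q
  have haq : mul a q = q := by
    have h1 : mul a q ≤ q := (haL q hq0).1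
    have h2 : q ≤ mul a q := by
      have := band_proj_comm_le mul mul_assoc mul_nonneg b hb hbL a ha haL a ha
      -- this : mul b (mul a a) ≤ mul a (mul b a)
      rwa [(haR b hb).2] at this
    exact le_antisymm h1 h2
  -- b p = p
  have hbp : mul b p = p := by
    have h1 : mul b p ≤ p := (hbL p hp0).1
    have h2 : p ≤ mul b p := by
      have := band_proj_comm_le mul mul_assoc mul_nonneg a ha haL b hb hbL b hb
      -- this : mul a (mul b b) ≤ mul b (mul a b)
      rwa [(hbR a ha).2] at this
    exact le_antisymm h1 h2
  -- q = a q ≤ a b = p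
  have hqp : q ≤ p := by
    have hpos : 0 ≤ b - q := sub_nonneg.mpr hqb
    have := mul_nonneg a (b - q) ha hpos
    rw [map_sub] at this
    calc q = mul a q := haq.symm
      _ ≤ mul a b := sub_nonneg.mp this
  -- p = b p ≤ b a = q
  have hpq : p ≤ q := by
    have hpos : 0 ≤ a - p := sub_nonneg.mpr hpa
    have := mul_nonneg b (a - p) hb hpos
    rw [map_sub] at this
    calc p = mul b p := hbp.symm
      _ ≤ mul b a := sub_nonneg.mp this
  exact le_antisymm hpq hqp
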